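/- Each permutation β_k (k ≥ 3) defined by β_k = 2,5,1,3,7,4, 9,6,11,8,...,2k+3,2k, 2k+5,2k+4,2k+2 is neither sum decomposable nor skew decomposable. -/
import Mathlib


/-- Pattern involvement: `σ` occurs as a pattern in `π`. -/
def Involves {k n : ℕ} (σ : Equiv.Perm (Fin k)) (π : Equiv.Perm (Fin n)) : Prop :=
  ∃ f : Fin k → Fin n, StrictMono f ∧ ∀ a b : Fin k, σ a < σ b ↔ π (f a) < π (f b)

/-- Finite permutations of arbitrary length. -/
abbrev PermS := Σ n : ℕ, Equiv.Perm (Fin n)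

/-- Pattern involvement on permutations of arbitrary length. -/
def SInvolves (s t : PermS) : Prop := Involves s.2 t.2

/-- A permutation class: a set of permutations closed downwards under involvement. -/
def IsPermClass (X : Set PermS) : Prop :=
  ∀ s t : PermS, SInvolves s t → t ∈ X → s ∈ X

/-- A set of positions is consecutive (order-convex). -/
def Consec {n : ℕ} (s : Finset (Fin n)) : Prop :=
  ∀ ⦃a b c : Fin n⦄, a ∈ s → c ∈ s → a ≤ b → b ≤ c → b ∈ s

/-- An interval (block) of a permutation: consecutive positions with consecutive values. -/
def IsInterval {n : ℕ} (π : Equiv.Perm (Fin n)) (s : Finset (Fin n)) : Prop :=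
  Consec s ∧ Consec (s.image π)

/-- `α` is the pattern of `π` on the set of positions `s`. -/
def IsPatternOf {k n : ℕ} (α : Equiv.Perm (Fin k)) (π : Equiv.Perm (Fin n))
    (s : Finset (Fin n)) : Prop :=
  ∃ f : Fin k → Fin n, StrictMono f ∧ (∀ i, f i ∈ s) ∧ (∀ x ∈ s, ∃ i, f i = x) ∧
    ∀ a b : Fin k, α a < α b ↔ π (f a) < π (f b)

/-- `π` is the inflation of `σ` with the given (nonempty, interval) blocks. -/
def IsInflation {n m : ℕ} (π : Equiv.Perm (Fin n)) (σ : Equiv.Perm (Fin m))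
    (blocks : Fin m → Finset (Fin n)) : Prop :=
  (∀ i, (blocks i).Nonempty) ∧
  (∀ i, IsInterval π (blocks i)) ∧
  (∀ x : Fin n, ∃! i, x ∈ blocks i) ∧
  (∀ i j : Fin m, i < j → ∀ x ∈ blocks i, ∀ y ∈ blocks j, x < y) ∧
  (∀ i j : Fin m, i ≠ j → ∀ x ∈ blocks i, ∀ y ∈ blocks j, (σ i < σ j ↔ π x < π y))

/-- `π'` is a `Y`-deflation of `π`: `π = π'[α₁,…,α_k]` with all `αᵢ ∈ Y`. -/
def IsYDeflation (Y : Set PermS) {m n : ℕ} (π' : Equiv.Perm (Fin m))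
    (π : Equiv.Perm (Fin n)) : Prop :=
  ∃ blocks : Fin m → Finset (Fin n), IsInflation π π' blocks ∧
    ∀ i, ∃ (k : ℕ) (α : Equiv.Perm (Fin k)), (⟨k, α⟩ : PermS) ∈ Y ∧ IsPatternOf α π (blocks i)

/-- Membership in the wreath product `X ≀ Y`. -/
def InWreath (X Y : Set PermS) {n : ℕ} (π : Equiv.Perm (Fin n)) : Prop :=
  ∃ (m : ℕ) (σ : Equiv.Perm (Fin m)), (⟨m, σ⟩ : PermS) ∈ X ∧ IsYDeflation Y σ π

/-- The wreath product `X ≀ Y` as a set of permutations. -/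
def WreathSet (X Y : Set PermS) : Set PermS := {s : PermS | InWreath X Y s.2}

/-- The class of permutations avoiding every pattern in `B`. -/
def Av (B : Set PermS) : Set PermS := {s : PermS | ∀ b ∈ B, ¬ SInvolves b s}

/-- The basis of a class: minimal permutations not in it. -/
def PermBasis (C : Set PermS) : Set PermS :=
  {s : PermS | s ∉ C ∧ ∀ t : PermS, SInvolves t s → t ≠ s → t ∈ C}

/-- A permutation is simple if its only intervals are trivial. -/
def IsSimple {n : ℕ} (π : Equiv.Perm (Fin n)) : Prop :=
  ∀ s : Finset (Fin n), IsInterval π s → s.card ≤ 1 ∨ s = Finset.univ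

/-- Sum decomposable: a proper nonempty initial block with the smallest values. -/
def SumDecomposable {n : ℕ} (π : Equiv.Perm (Fin n)) : Prop :=
  ∃ s : Finset (Fin n), s.Nonempty ∧ s ≠ Finset.univ ∧
    ∀ x ∈ s, ∀ y : Fin n, y ∉ s → x < y ∧ π x < π y

/-- Skew decomposable: a proper nonempty initial block with the largest values. -/
def SkewDecomposable {n : ℕ} (π : Equiv.Perm (Fin n)) : Prop :=
  ∃ s : Finset (Fin n), s.Nonempty ∧ s ≠ Finset.univ ∧
    ∀ x ∈ s, ∀ y : Fin n, y ∉ s → x < y ∧ π y < π x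

/-- The value of the antichain element `β_k` at (0-indexed) position `j` (0-indexed values). -/
def betaVal (k j : ℕ) : ℕ :=
  if j = 0 then 1 else if j = 1 then 4 else if j = 2 then 0 else if j = 3 then 2
  else if j = 4 then 6 else if j = 5 then 3
  else if j = 2*k+2 then 2*k+4 else if j = 2*k+3 then 2*k+3 else if j = 2*k+4 then 2*k+1
  else if j % 2 = 0 then j + 2 else j - 2

/-- `π` is the permutation `β_k = 2,5,1,3,7,4,9,6,11,8,…,2k+3,2k,2k+5,2k+4,2k+2`. -/
def IsBeta (k : ℕ) (π : Equiv.Perm (Fin (2*k+5))) : Prop :=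
  ∀ j : Fin (2*k+5), (π j : ℕ) = betaVal k (j : ℕ)


/-- A lower set in `Fin n` consists exactly of the elements below its cardinality. -/
lemma lower_iff_card {n : ℕ} (s : Finset (Fin n))
    (hlow : ∀ a ∈ s, ∀ b : Fin n, b ≤ a → b ∈ s) (j : Fin n) :
    j ∈ s ↔ (j : ℕ) < s.card := by
  constructor
  · intro hj
    have hsub : Finset.Iic j ⊆ s := fun b hb => hlow j hj b (Finset.mem_Iic.mp hb)
    have := Finset.card_le_card hsub
    rw [Fin.card_Iic] at this
    omega
  · intro hj
    by_contra hns
    have hsub : s ⊆ Finset.Iio j := by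
      intro a ha
      rw [Finset.mem_Iio]
      by_contra hle
      exact hns (hlow a ha j (le_of_not_gt hle))
    have := Finset.card_le_card hsub
    rw [Fin.card_Iio] at this
    omega

lemma beta_big (k j m : ℕ) (h2 : j % 2 = 0) (h6 : 6 ≤ j) (hle : j ≤ 2*k+2)
    (hm : m ≤ j + 2) : m ≤ betaVal k j := by
  unfold betaVal
  split_ifs <;> omega

/-- each `β_k` (`k ≥ 3`) is neither sum decomposable nor skew
decomposable. -/
theorem beta_indecomposable (k : ℕ) (hk : 3 ≤ k) (π : Equiv.Perm (Fin (2*k+5)))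
    (hπ : IsBeta k π) :
    ¬ SumDecomposable π ∧ ¬ SkewDecomposable π := by
  have b0 : betaVal k 0 = 1 := by simp [betaVal]
  have b1 : betaVal k 1 = 4 := by simp [betaVal]
  have b2 : betaVal k 2 = 0 := by simp [betaVal]
  have b4 : betaVal k 4 = 6 := by simp [betaVal]
  constructor
  · rintro ⟨s, hne, hneu, hprop⟩
    set m := s.card with hm
    -- s is a lower set of positions
    have hlows : ∀ a ∈ s, ∀ b : Fin (2*k+5), b ≤ a → b ∈ s := by
      intro a ha b hb
      by_contra hbs
      exact absurd (hprop a ha b hbs).1 (not_lt.mpr hb)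
    have hpos : ∀ j : Fin (2*k+5), j ∈ s ↔ (j : ℕ) < m :=
      lower_iff_card s hlows
    -- the image is a lower set of values
    set t := s.image π with ht
    have hlowt : ∀ a ∈ t, ∀ b : Fin (2*k+5), b ≤ a → b ∈ t := by
      intro a ha b hb
      obtain ⟨x, hx, hxa⟩ := Finset.mem_image.mp ha
      by_contra hbt
      have hy : π.symm b ∉ s := by
        intro hy
        exact hbt (Finset.mem_image.mpr ⟨π.symm b, hy, π.apply_symm_apply b⟩)
      have := (hprop x hx (π.symm b) hy).2
      rw [π.apply_symm_apply, hxa] at this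
      exact absurd this (not_lt.mpr hb)
    have htcard : t.card = m := Finset.card_image_of_injective s π.injective
    have hval : ∀ j : Fin (2*k+5), j ∈ t ↔ (j : ℕ) < m := by
      intro j; rw [lower_iff_card t hlowt j, htcard]
    -- key equivalence
    have H : ∀ j : ℕ, j < 2*k+5 → (j < m ↔ betaVal k j < m) := by
      intro j hj
      have h1 := hpos ⟨j, hj⟩
      have h2 := hval (π ⟨j, hj⟩)
      have h3 : π ⟨j, hj⟩ ∈ t ↔ (⟨j, hj⟩ : Fin (2*k+5)) ∈ s := by
        constructor
        · intro h
          obtain ⟨x, hx, hxe⟩ := Finset.mem_image.mp h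
          rwa [π.injective hxe] at hx
        · intro h; exact Finset.mem_image.mpr ⟨_, h, rfl⟩
      have h4 := hπ ⟨j, hj⟩
      simp only [h3, h1] at h2
      rw [h4] at h2
      simpa using h2
    have hm1 : 1 ≤ m := Finset.card_pos.mpr hne
    have hmle : m < 2*k+5 := by
      have hle : m ≤ 2*k+5 := by
        have := Finset.card_le_card (Finset.subset_univ s)
        simpa using this
      rcases lt_or_eq_of_le hle with h | h
      · exact h
      · exact absurd (Finset.eq_univ_of_card s (by simpa using h)) hneu
    rcases Nat.lt_or_ge m 7 with hm7 | hm7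
    · have H0 := H 0 (by omega)
      have H1 := H 1 (by omega)
      have H4 := H 4 (by omega)
      rw [b0] at H0; rw [b1] at H1; rw [b4] at H4
      omega
    · obtain ⟨j, hj2, hj6, hjle, hjm, hmj⟩ :
        ∃ j, j % 2 = 0 ∧ 6 ≤ j ∧ j ≤ 2*k+2 ∧ j < m ∧ m ≤ j + 2 := by
        refine ⟨if m % 2 = 0 then m - 2 else m - 1, ?_⟩
        split_ifs <;> omega
      have := beta_big k j m hj2 hj6 hjle hmj
      have Hj := H j (by omega)
      omega
  · rintro ⟨s, hne, hneu, hprop⟩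
    have h2lt : (2 : ℕ) < 2*k+5 := by omega
    have h4lt : (4 : ℕ) < 2*k+5 := by omega
    set p2 : Fin (2*k+5) := ⟨2, h2lt⟩ with hp2
    set p4 : Fin (2*k+5) := ⟨4, h4lt⟩ with hp4
    by_cases h2 : p2 ∈ s
    · obtain ⟨y, hy⟩ : ∃ y, y ∉ s := by
        by_contra h; push_neg at h
        exact hneu (Finset.eq_univ_of_forall h)
      have := (hprop p2 h2 y hy).2
      rw [Fin.lt_def] at this
      have hv2 : (π p2 : ℕ) = betaVal k 2 := hπ p2
      omega
    · obtain ⟨x, hx⟩ := hne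
      have h4 : p4 ∉ s := by
        intro h4
        have := (hprop p4 h4 p2 h2).1
        rw [Fin.lt_def] at this
        simp [hp2, hp4] at this
      have hx2 := (hprop x hx p2 h2).1
      rw [Fin.lt_def] at hx2
      have hx4 := (hprop x hx p4 h4).2
      rw [Fin.lt_def] at hx4
      have hv4 : (π p4 : ℕ) = betaVal k 4 := hπ p4
      have hvx : (π x : ℕ) = betaVal k (x : ℕ) := hπ x
      have : (x : ℕ) = 0 ∨ (x : ℕ) = 1 := by simp [hp2] at hx2; omega
      rcases this with h | h <;> rw [h] at hvx <;> omega
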